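/- Let d ≥ 2, fix x in EuclideanSpace ℝ (Fin d) and a unit vector n_x, and let π_x(z) = z − ⟨z, n_x⟩ n_x. Then the map G(y) = π_x((x − y)/‖x − y‖), defined for y ≠ x, is differentiable at every y ≠ x, and its Fréchet derivative at y applied to a vector η equals (−π_x(η) + ⟨u, η⟩ π_x(u))/‖x − y‖, where u = (y − x)/‖x − y‖. -/

import Mathlib

open scoped RealInnerProductSpace

/-- Part (c) of the Proposition: derivative in `y` of the projected unit chord
field `G(y) = π_x((x - y)/‖x - y‖)`. -/
theorem stmt_3 (d : ℕ) (hd : 2 ≤ d)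
    (x nx : EuclideanSpace ℝ (Fin d)) (hnx : ‖nx‖ = 1)
    (πx : EuclideanSpace ℝ (Fin d) → EuclideanSpace ℝ (Fin d))
    (hπx : ∀ z, πx z = z - ⟪z, nx⟫ • nx)
    (G : EuclideanSpace ℝ (Fin d) → EuclideanSpace ℝ (Fin d))
    (hG : ∀ z, G z = πx (‖x - z‖⁻¹ • (x - z)))
    (y : EuclideanSpace ℝ (Fin d)) (hy : y ≠ x)
    (u : EuclideanSpace ℝ (Fin d)) (hu : u = ‖x - y‖⁻¹ • (y - x)) :
    ∃ D : EuclideanSpace ℝ (Fin d) →L[ℝ] EuclideanSpace ℝ (Fin d),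
      HasFDerivAt G D y ∧
      ∀ η : EuclideanSpace ℝ (Fin d),
        D η = ‖x - y‖⁻¹ • (-(πx η) + ⟪u, η⟫ • πx u) := by
  have hxy : x - y ≠ 0 := sub_ne_zero.mpr (Ne.symm hy)
  have hr : (0:ℝ) < ‖x - y‖ := norm_pos_iff.mpr hxy
  set P : EuclideanSpace ℝ (Fin d) →L[ℝ] EuclideanSpace ℝ (Fin d) :=
    ContinuousLinearMap.id ℝ _ - (innerSL ℝ nx).smulRight nx with hP
  have hPapp : ∀ z, P z = πx z := by
    intro z
    rw [hπx]
    simp only [hP, ContinuousLinearMap.sub_apply, ContinuousLinearMap.coe_id', id_eq,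
      ContinuousLinearMap.smulRight_apply, innerSL_apply_apply, real_inner_comm]
  have h1 : HasFDerivAt (fun z : EuclideanSpace ℝ (Fin d) => x - z)
      (-(ContinuousLinearMap.id ℝ _)) y := (hasFDerivAt_id y).const_sub x
  have h2 := h1.inner ℝ h1
  have hinner_ne : ⟪x - y, x - y⟫ ≠ 0 := by
    rw [real_inner_self_eq_norm_mul_norm]
    exact mul_ne_zero hr.ne' hr.ne'
  have h3 := (Real.hasDerivAt_sqrt hinner_ne).comp_hasFDerivAt y h2
  have h3' : HasFDerivAt (fun z => ‖x - z‖)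
      ((1 / (2 * Real.sqrt ⟪x - y, x - y⟫)) •
        ((fderivInnerCLM ℝ (x - y, x - y)).comp
          ((-(ContinuousLinearMap.id ℝ _)).prod (-(ContinuousLinearMap.id ℝ _))))) y := by
    refine h3.congr_of_eventuallyEq (Filter.EventuallyEq.of_eq (funext fun z => ?_))
    show ‖x - z‖ = Real.sqrt ⟪x - z, x - z⟫
    rw [real_inner_self_eq_norm_mul_norm, Real.sqrt_mul_self (norm_nonneg _)]
  have h4 := (hasDerivAt_inv hr.ne').comp_hasFDerivAt y h3'
  have h5 := h4.smul h1
  have h6 := (P.hasFDerivAt).comp y h5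
  have hGfun : G = fun z => P (‖x - z‖⁻¹ • (x - z)) := funext fun z => by
    rw [hG, hPapp]
  refine ⟨P.comp
      ((‖x - y‖⁻¹ : ℝ) • -(ContinuousLinearMap.id ℝ _) +
        (-(‖x - y‖ ^ 2)⁻¹ • (1 / (2 * Real.sqrt ⟪x - y, x - y⟫)) •
          ((fderivInnerCLM ℝ (x - y, x - y)).comp
            ((-(ContinuousLinearMap.id ℝ _)).prod
              (-(ContinuousLinearMap.id ℝ _))))).smulRight (x - y)), ?_, ?_⟩
  · rw [hGfun]; exact h6
  intro η
  simp only [ContinuousLinearMap.coe_comp', Function.comp_apply,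
    ContinuousLinearMap.add_apply, ContinuousLinearMap.coe_smul', Pi.smul_apply,
    ContinuousLinearMap.smulRight_apply, ContinuousLinearMap.neg_apply,
    ContinuousLinearMap.coe_id', id_eq, fderivInnerCLM_apply,
    ContinuousLinearMap.prod_apply, map_add, map_smul, map_neg]
  have hsqrt : Real.sqrt ⟪x - y, x - y⟫ = ‖x - y‖ := by
    rw [real_inner_self_eq_norm_mul_norm, Real.sqrt_mul_self (norm_nonneg _)]
  rw [hsqrt]
  simp only [← hPapp, hu, ← neg_sub x y, map_smul, map_neg, inner_smul_left,
    inner_neg_left, inner_neg_right, RCLike.conj_to_real, conj_trivial]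
  simp only [real_inner_comm η]
  match_scalars
  · field_simp
  · field_simp
    simp only [smul_eq_mul]; field_simp; ring
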